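/- Every integer n ≥ 28 can be written as x² + T_y + T_z with x, y, z ∈ ℕ and z ≥ 7. -/

import Mathlib

def Q2 (a b d y z : ℤ) : ℤ := a*y^2 + b*z^2 + 2*d*y*z

lemma exists_min2 (a b d : ℤ) (pos : ∀ y z : ℤ, ¬(y = 0 ∧ z = 0) → 0 < Q2 a b d y z) :
    ∃ (m : ℤ) (y₀ z₀ : ℤ), ¬(y₀ = 0 ∧ z₀ = 0) ∧ Q2 a b d y₀ z₀ = m ∧
      ∀ y z : ℤ, ¬(y = 0 ∧ z = 0) → m ≤ Q2 a b d y z := by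
  set S : Set ℕ := {k | ∃ y z : ℤ, ¬(y = 0 ∧ z = 0) ∧ Q2 a b d y z = (k : ℤ)} with hS
  have hne : S.Nonempty := by
    refine ⟨(Q2 a b d 1 0).toNat, 1, 0, by simp, ?_⟩
    rw [Int.toNat_of_nonneg (le_of_lt (pos 1 0 (by simp)))]
  obtain ⟨y₀, z₀, hnz, hval⟩ := Nat.sInf_mem hne
  refine ⟨(sInf S : ℕ), y₀, z₀, hnz, hval, ?_⟩
  intro y z hyz
  have h1 : (Q2 a b d y z).toNat ∈ S := by
    refine ⟨y, z, hyz, ?_⟩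
    rw [Int.toNat_of_nonneg (le_of_lt (pos y z hyz))]
  have := Nat.sInf_le h1
  have h2 : ((Q2 a b d y z).toNat : ℤ) = Q2 a b d y z :=
    Int.toNat_of_nonneg (le_of_lt (pos y z hyz))
  omega

/-- full binary reduction -/
lemma binary_reduce (a b d : ℤ) (pos : ∀ y z : ℤ, ¬(y = 0 ∧ z = 0) → 0 < Q2 a b d y z) :
    ∃ m B D P Q R S : ℤ, P*S - Q*R = 1 ∧
      (∀ Y Z : ℤ, Q2 a b d (P*Y+Q*Z) (R*Y+S*Z) = Q2 m B D Y Z) ∧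
      0 < m ∧ m ≤ B ∧ 2*|D| ≤ m ∧ m*B - D^2 = a*b - d^2 ∧
      (∀ y z : ℤ, ¬(y = 0 ∧ z = 0) → m ≤ Q2 a b d y z) := by
  obtain ⟨m, y₀, z₀, hnz, hval, hmin⟩ := exists_min2 a b d pos
  have hm : 0 < m := hval ▸ pos y₀ z₀ hnz
  -- primitivity
  have hg : Int.gcd y₀ z₀ = 1 := by
    set g : ℕ := Int.gcd y₀ z₀ with hgdef
    have hg0 : g ≠ 0 := by
      intro h
      exact hnz (Int.gcd_eq_zero_iff.mp h)
    obtain ⟨y₁, hy₁⟩ : (g:ℤ) ∣ y₀ := Int.gcd_dvd_left _ _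
    obtain ⟨z₁, hz₁⟩ : (g:ℤ) ∣ z₀ := Int.gcd_dvd_right _ _
    have hnz1 : ¬(y₁ = 0 ∧ z₁ = 0) := by
      rintro ⟨rfl, rfl⟩; exact hnz ⟨by simpa using hy₁, by simpa using hz₁⟩
    have hsc : Q2 a b d y₀ z₀ = (g:ℤ)^2 * Q2 a b d y₁ z₁ := by
      rw [hy₁, hz₁]; unfold Q2; ring
    have h1 := hmin y₁ z₁ hnz1
    have h2 := pos y₁ z₁ hnz1
    nlinarith [hsc, hval, (by positivity : (0:ℤ) < (g:ℤ)^2), sq_nonneg ((g:ℤ) - 1),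
      (by exact_mod_cast Nat.pos_of_ne_zero hg0 : (0:ℤ) < (g:ℤ))]
  -- Bezout
  obtain ⟨s, t, hst⟩ : ∃ s t : ℤ, s*y₀ + t*z₀ = 1 := by
    refine ⟨Int.gcdA y₀ z₀, Int.gcdB y₀ z₀, ?_⟩
    have := Int.gcd_eq_gcd_ab y₀ z₀
    rw [hg] at this; push_cast at this; linarith [this]
  -- second column before shear: (-t, s); d' value
  set d' : ℤ := a*y₀*(-t) + b*z₀*s + d*(y₀*s + (-t)*z₀) with hd'
  -- rounding
  obtain ⟨q, hq1, hq2⟩ : ∃ q : ℤ, -m ≤ 2*(d' + q*m) ∧ 2*(d' + q*m) ≤ m := by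
    have h1 := Int.emod_nonneg d' (ne_of_gt hm)
    have h2 := Int.emod_lt_of_pos d' hm
    have hv1 : d' + (-(d'/m))*m = d' % m := by
      have h0 := Int.mul_ediv_add_emod d' m
      linear_combination - h0
    have hv2 : d' + (-(d'/m) - 1)*m = d' % m - m := by
      have h0 := Int.mul_ediv_add_emod d' m
      linear_combination - h0
    rcases le_or_gt (2*(d' % m)) m with h | h
    · exact ⟨-(d'/m), by rw [hv1]; omega, by rw [hv1]; omega⟩
    · exact ⟨-(d'/m) - 1, by rw [hv2]; omega, by rw [hv2]; omega⟩
  set P := y₀ with hP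
  set R := z₀ with hR
  set Q := -t + q*y₀ with hQ
  set S := s + q*z₀ with hS
  have hdet : P*S - Q*R = 1 := by simp only [hP, hQ, hR, hS]; linarith [hst]; 
  set B := Q2 a b d Q S with hB
  set D : ℤ := d' + q*m with hD
  have hDbil : D = a*P*Q + b*R*S + d*(P*S + Q*R) := by
    simp only [hD, hd', hP, hQ, hR, hS, ← hval]; unfold Q2; ring
  have htrans : ∀ Y Z : ℤ, Q2 a b d (P*Y+Q*Z) (R*Y+S*Z) = Q2 m B D Y Z := by
    intro Y Z
    simp only [← hval, hB, hDbil]; unfold Q2; ring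
  have hQS : ¬(Q = 0 ∧ S = 0) := by rintro ⟨h1, h2⟩; rw [h1, h2] at hdet; simp at hdet
  have hBm : m ≤ B := hmin Q S hQS
  have hdisc : m*B - D^2 = a*b - d^2 := by
    have : m*B - D^2 = (a*b - d^2) * (P*S - Q*R)^2 := by
      simp only [← hval, hB, hDbil]; unfold Q2; ring
    rw [this, hdet]; ring
  have habs : 2*|D| ≤ m := by
    have : |2*D| ≤ m := abs_le.mpr ⟨by linarith, by linarith⟩
    rwa [abs_mul, abs_two] at this
  exact ⟨m, B, D, P, Q, R, S, hdet, htrans, hm, hBm, habs, hdisc, hmin⟩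


def Q3 (a b c d e f x y z : ℤ) : ℤ :=
  a*x^2 + b*y^2 + c*z^2 + 2*(d*x*y + e*x*z + f*y*z)

def det3 (a b c d e f : ℤ) : ℤ := a*b*c + 2*d*e*f - a*f^2 - b*e^2 - c*d^2

/-- completing a primitive integer vector to a unimodular 3×3 matrix (as first column) -/
lemma complete_unimodular (x₀ y₀ z₀ : ℤ) (hg : Int.gcd (↑(Int.gcd x₀ y₀)) z₀ = 1) :
    ∃ p12 p13 p22 p23 p32 p33 : ℤ,
      x₀*p22*p33 - x₀*p23*p32 - p12*y₀*p33 + p12*p23*z₀ + p13*y₀*p32 - p13*p22*z₀ = 1 := by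
  rcases eq_or_ne (Int.gcd x₀ y₀) 0 with h0 | h0
  · -- x₀ = y₀ = 0, z₀ = ±1
    obtain ⟨hx, hy⟩ := Int.gcd_eq_zero_iff.mp h0
    subst hx; subst hy
    simp [Int.gcd] at hg
    -- matrix columns (0,0,z₀), (1,0,0), (0,z₀,0)
    refine ⟨1, 0, 0, z₀, 0, 0, ?_⟩
    have : z₀ = 1 ∨ z₀ = -1 := by
      rcases Int.natAbs_eq z₀ with h | h <;> rw [hg] at h <;> [left; right] <;> simpa using h
    rcases this with h | h <;> subst h <;> ring
  · set g : ℕ := Int.gcd x₀ y₀ with hgdef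
    obtain ⟨x₁, hx₁⟩ : (g:ℤ) ∣ x₀ := Int.gcd_dvd_left _ _
    obtain ⟨y₁, hy₁⟩ : (g:ℤ) ∣ y₀ := Int.gcd_dvd_right _ _
    obtain ⟨s, t, hst⟩ : ∃ s t : ℤ, s*x₀ + t*y₀ = (g:ℤ) := by
      refine ⟨Int.gcdA x₀ y₀, Int.gcdB x₀ y₀, ?_⟩
      have := Int.gcd_eq_gcd_ab x₀ y₀
      linarith [this]
    obtain ⟨u, w, huw⟩ : ∃ u w : ℤ, u*(g:ℤ) + w*z₀ = 1 := by
      refine ⟨Int.gcdA (g:ℤ) z₀, Int.gcdB (g:ℤ) z₀, ?_⟩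
      have h2 := Int.gcd_eq_gcd_ab ((g:ℤ)) z₀
      rw [hg] at h2; push_cast at h2; linarith [h2]
    have hg0 : (g:ℤ) ≠ 0 := by exact_mod_cast h0
    have hst1 : s*x₁ + t*y₁ = 1 := by
      have : (g:ℤ) * (s*x₁ + t*y₁) = (g:ℤ) * 1 := by
        rw [hx₁, hy₁] at hst; linarith [hst]
      exact mul_left_cancel₀ hg0 this
    -- columns: (x₀,y₀,z₀), (-t,s,0), (-w*x₁, -w*y₁, u)
    refine ⟨-t, -w*x₁, s, -w*y₁, 0, u, ?_⟩
    have hxg : x₀ = (g:ℤ)*x₁ := hx₁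
    have hyg : y₀ = (g:ℤ)*y₁ := hy₁
    -- det = u*(s*x₀+t*y₀) + w*z₀*(s*x₁+t*y₁) = u*g + w*z₀ = 1
    calc x₀*s*u - x₀*(-w*y₁)*0 - (-t)*y₀*u + (-t)*(-w*y₁)*z₀ + (-w*x₁)*y₀*0 - (-w*x₁)*s*z₀
        = u*(s*x₀ + t*y₀) + w*z₀*(s*x₁ + t*y₁) := by ring
      _ = 1 := by rw [hst, hst1]; linarith [huw]

lemma exists_min3 (a b c d e f : ℤ)
    (pos : ∀ x y z : ℤ, ¬(x = 0 ∧ y = 0 ∧ z = 0) → 0 < Q3 a b c d e f x y z) :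
    ∃ (m x₀ y₀ z₀ : ℤ), ¬(x₀ = 0 ∧ y₀ = 0 ∧ z₀ = 0) ∧ Q3 a b c d e f x₀ y₀ z₀ = m ∧
      ∀ x y z : ℤ, ¬(x = 0 ∧ y = 0 ∧ z = 0) → m ≤ Q3 a b c d e f x y z := by
  set S : Set ℕ := {k | ∃ x y z : ℤ, ¬(x = 0 ∧ y = 0 ∧ z = 0) ∧ Q3 a b c d e f x y z = (k : ℤ)}
    with hS
  have hne : S.Nonempty := by
    refine ⟨(Q3 a b c d e f 1 0 0).toNat, 1, 0, 0, by simp, ?_⟩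
    rw [Int.toNat_of_nonneg (le_of_lt (pos 1 0 0 (by simp)))]
  obtain ⟨x₀, y₀, z₀, hnz, hval⟩ := Nat.sInf_mem hne
  refine ⟨(sInf S : ℕ), x₀, y₀, z₀, hnz, hval, ?_⟩
  intro x y z hxyz
  have h1 : (Q3 a b c d e f x y z).toNat ∈ S := by
    refine ⟨x, y, z, hxyz, ?_⟩
    rw [Int.toNat_of_nonneg (le_of_lt (pos x y z hxyz))]
  have := Nat.sInf_le h1
  have h2 : ((Q3 a b c d e f x y z).toNat : ℤ) = Q3 a b c d e f x y z :=
    Int.toNat_of_nonneg (le_of_lt (pos x y z hxyz))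
  omega

lemma binary_min_bound (a b d : ℤ) (pos : ∀ y z : ℤ, ¬(y = 0 ∧ z = 0) → 0 < Q2 a b d y z) :
    ∃ μ Y₀ Z₀ : ℤ, ¬(Y₀ = 0 ∧ Z₀ = 0) ∧ Q2 a b d Y₀ Z₀ = μ ∧ 3*μ^2 ≤ 4*(a*b - d^2) := by
  obtain ⟨m, B, D, P, Q, R, S, hdet, htrans, hm, hBm, habs, hdisc, hmin⟩ := binary_reduce a b d pos
  have hPR : ¬(P = 0 ∧ R = 0) := by rintro ⟨h1, h2⟩; rw [h1, h2] at hdet; simp at hdet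
  have hatt : Q2 a b d P R = m := by
    have := htrans 1 0
    simp only [mul_one, mul_zero, add_zero] at this
    rw [this]; unfold Q2; ring
  have h4 : 4*D^2 ≤ m^2 := by nlinarith [habs, abs_nonneg D, sq_abs D]
  have hb : 3*m^2 ≤ 4*(a*b - d^2) := by nlinarith [hm, hBm, h4, hdisc]
  exact ⟨m, P, R, hPR, hatt, hb⟩

lemma binary_sum_two_squares (a b d : ℤ)
    (pos : ∀ y z : ℤ, ¬(y = 0 ∧ z = 0) → 0 < Q2 a b d y z) (hΔ : a*b - d^2 = 1) :
    ∀ y z : ℤ, ∃ r s : ℤ, Q2 a b d y z = r^2 + s^2 := by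
  obtain ⟨m, B, D, P, Q, R, S, hdet, htrans, hm, hBm, habs, hdisc, hmin⟩ := binary_reduce a b d pos
  rw [hΔ] at hdisc
  have hmB : m*m ≤ m*B := mul_le_mul_of_nonneg_left hBm (le_of_lt hm)
  have h4 : 4*D^2 ≤ m^2 := by nlinarith [habs, abs_nonneg D, sq_abs D]
  have hm1 : m = 1 := by nlinarith [hm, hdisc, hmB, h4, sq_nonneg (m - 1), sq_nonneg (m - 2)]
  have hD0 : D = 0 := by
    rw [hm1] at habs
    have h5 := abs_nonneg D
    have h6 : |D| = 0 := by omega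
    exact abs_eq_zero.mp h6
  have hB1 : B = 1 := by rw [hm1, hD0] at hdisc; linarith
  intro y z
  refine ⟨S*y - Q*z, -R*y + P*z, ?_⟩
  have h1 : P*(S*y - Q*z) + Q*(-R*y + P*z) = y := by linear_combination y*hdet
  have h2 : R*(S*y - Q*z) + S*(-R*y + P*z) = z := by linear_combination z*hdet
  have := htrans (S*y - Q*z) (-R*y + P*z)
  rw [h1, h2, hm1, hD0, hB1] at this
  rw [this]; unfold Q2; ring

set_option maxHeartbeats 2000000 in
theorem ternary_corner (a b c d e f : ℤ)
    (pos : ∀ x y z : ℤ, ¬(x = 0 ∧ y = 0 ∧ z = 0) → 0 < Q3 a b c d e f x y z)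
    (hdet : det3 a b c d e f = 1) :
    ∃ r s t : ℤ, a = r^2 + s^2 + t^2 := by
  obtain ⟨m, x₀, y₀, z₀, hnz, hval, hmin⟩ := exists_min3 a b c d e f pos
  have hm : 0 < m := by rw [← hval]; exact pos x₀ y₀ z₀ hnz
  -- primitivity
  have hg : Int.gcd (↑(Int.gcd x₀ y₀)) z₀ = 1 := by
    set G : ℕ := Int.gcd (↑(Int.gcd x₀ y₀)) z₀ with hGdef
    have hG0 : G ≠ 0 := by
      intro h
      obtain ⟨h1, h2⟩ := Int.gcd_eq_zero_iff.mp h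
      have h3 : Int.gcd x₀ y₀ = 0 := by exact_mod_cast h1
      obtain ⟨h4, h5⟩ := Int.gcd_eq_zero_iff.mp h3
      exact hnz ⟨h4, h5, h2⟩
    obtain ⟨x₁, hx₁⟩ : (G:ℤ) ∣ x₀ := dvd_trans (Int.gcd_dvd_left _ _) (Int.gcd_dvd_left _ _)
    obtain ⟨y₁, hy₁⟩ : (G:ℤ) ∣ y₀ := dvd_trans (Int.gcd_dvd_left _ _) (Int.gcd_dvd_right _ _)
    obtain ⟨z₁, hz₁⟩ : (G:ℤ) ∣ z₀ := Int.gcd_dvd_right _ _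
    have hnz1 : ¬(x₁ = 0 ∧ y₁ = 0 ∧ z₁ = 0) := by
      rintro ⟨rfl, rfl, rfl⟩
      exact hnz ⟨by simpa using hx₁, by simpa using hy₁, by simpa using hz₁⟩
    have hsc : Q3 a b c d e f x₀ y₀ z₀ = (G:ℤ)^2 * Q3 a b c d e f x₁ y₁ z₁ := by
      rw [hx₁, hy₁, hz₁]; unfold Q3; ring
    have h1 := hmin x₁ y₁ z₁ hnz1
    have h2 := pos x₁ y₁ z₁ hnz1
    have hG1 : (0:ℤ) < (G:ℤ) := by exact_mod_cast Nat.pos_of_ne_zero hG0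
    nlinarith [hsc, hval, sq_nonneg ((G:ℤ) - 1)]
  obtain ⟨p12, p13, p22, p23, p32, p33, hU⟩ := complete_unimodular x₀ y₀ z₀ hg
  -- new coefficients (opaque)
  obtain ⟨b', hb'⟩ : ∃ t, t = Q3 a b c d e f p12 p22 p32 := ⟨_, rfl⟩
  obtain ⟨c', hc'⟩ : ∃ t, t = Q3 a b c d e f p13 p23 p33 := ⟨_, rfl⟩
  obtain ⟨d', hd'⟩ : ∃ t, t = a*x₀*p12 + b*y₀*p22 + c*z₀*p32 + d*(x₀*p22+p12*y₀)
      + e*(x₀*p32+p12*z₀) + f*(y₀*p32+p22*z₀) := ⟨_, rfl⟩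
  obtain ⟨e', he'⟩ : ∃ t, t = a*x₀*p13 + b*y₀*p23 + c*z₀*p33 + d*(x₀*p23+p13*y₀)
      + e*(x₀*p33+p13*z₀) + f*(y₀*p33+p23*z₀) := ⟨_, rfl⟩
  obtain ⟨f', hf'⟩ : ∃ t, t = a*p12*p13 + b*p22*p23 + c*p32*p33 + d*(p12*p23+p13*p22)
      + e*(p12*p33+p13*p32) + f*(p22*p33+p23*p32) := ⟨_, rfl⟩
  have htrans : ∀ X Y Z : ℤ, Q3 a b c d e f (x₀*X + p12*Y + p13*Z) (y₀*X + p22*Y + p23*Z)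
      (z₀*X + p32*Y + p33*Z) = Q3 m b' c' d' e' f' X Y Z := by
    intro X Y Z
    rw [← hval, hb', hc', hd', he', hf']; unfold Q3; ring
  have hdet' : det3 m b' c' d' e' f' = 1 := by
    have hid : det3 (Q3 a b c d e f x₀ y₀ z₀) b' c' d' e' f' = det3 a b c d e f *
        (x₀*p22*p33 - x₀*p23*p32 - p12*y₀*p33 + p12*p23*z₀ + p13*y₀*p32 - p13*p22*z₀)^2 := by
      rw [hb', hc', hd', he', hf']; unfold det3 Q3; ring
    rw [hval, hU, hdet] at hid; simpa using hid
  have hinj : ∀ X Y Z : ℤ, x₀*X + p12*Y + p13*Z = 0 → y₀*X + p22*Y + p23*Z = 0 →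
      z₀*X + p32*Y + p33*Z = 0 → (X = 0 ∧ Y = 0 ∧ Z = 0) := by
    intro X Y Z h1 h2 h3
    refine ⟨?_, ?_, ?_⟩
    · linear_combination (p22*p33 - p23*p32)*h1 + (p13*p32 - p12*p33)*h2
        + (p12*p23 - p13*p22)*h3 - X*hU
    · linear_combination (p23*z₀ - y₀*p33)*h1 + (x₀*p33 - p13*z₀)*h2
        + (p13*y₀ - x₀*p23)*h3 - Y*hU
    · linear_combination (y₀*p32 - p22*z₀)*h1 + (p12*z₀ - x₀*p32)*h2
        + (x₀*p22 - p12*y₀)*h3 - Z*hU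
  have hmin' : ∀ X Y Z : ℤ, ¬(X = 0 ∧ Y = 0 ∧ Z = 0) → m ≤ Q3 m b' c' d' e' f' X Y Z := by
    intro X Y Z hXYZ
    rw [← htrans]
    refine hmin _ _ _ ?_
    rintro ⟨h1, h2, h3⟩
    exact hXYZ (hinj X Y Z h1 h2 h3)
  -- Schur-complement binary form
  obtain ⟨gA, hgA⟩ : ∃ t, t = m*b' - d'^2 := ⟨_, rfl⟩
  obtain ⟨gB, hgB⟩ : ∃ t, t = m*c' - e'^2 := ⟨_, rfl⟩
  obtain ⟨gD, hgD⟩ : ∃ t, t = m*f' - d'*e' := ⟨_, rfl⟩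
  have I1 : ∀ X Y Z : ℤ, m * Q3 m b' c' d' e' f' X Y Z
      = (m*X + d'*Y + e'*Z)^2 + Q2 gA gB gD Y Z := by
    intro X Y Z; rw [hgA, hgB, hgD]; unfold Q3 Q2; ring
  have hdiscG : gA*gB - gD^2 = m := by
    have h0 : gA*gB - gD^2 = m * det3 m b' c' d' e' f' := by
      rw [hgA, hgB, hgD]; unfold det3; ring
    rw [h0, hdet', mul_one]
  have claim : ∀ Y Z : ℤ, ¬(Y = 0 ∧ Z = 0) → 3*m^2 ≤ 4*Q2 gA gB gD Y Z := by
    intro Y Z hYZ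
    obtain ⟨sv, hsv⟩ : ∃ t, t = d'*Y + e'*Z := ⟨_, rfl⟩
    obtain ⟨q, hq1, hq2⟩ : ∃ q : ℤ, -m ≤ 2*(sv + q*m) ∧ 2*(sv + q*m) ≤ m := by
      have h1 := Int.emod_nonneg sv (ne_of_gt hm)
      have h2 := Int.emod_lt_of_pos sv hm
      have hv1 : sv + (-(sv/m))*m = sv % m := by
        have h0 := Int.mul_ediv_add_emod sv m
        linear_combination - h0
      have hv2 : sv + (-(sv/m) - 1)*m = sv % m - m := by
        have h0 := Int.mul_ediv_add_emod sv m
        linear_combination - h0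
      rcases le_or_gt (2*(sv % m)) m with h | h
      · exact ⟨-(sv/m), by rw [hv1]; omega, by rw [hv1]; omega⟩
      · exact ⟨-(sv/m) - 1, by rw [hv2]; omega, by rw [hv2]; omega⟩
    have hvec : ¬(q = 0 ∧ Y = 0 ∧ Z = 0) := by rintro ⟨-, h1, h2⟩; exact hYZ ⟨h1, h2⟩
    have h3 := hmin' q Y Z hvec
    have h40 := I1 q Y Z
    have h4 : m * Q3 m b' c' d' e' f' q Y Z = (m*q + sv)^2 + Q2 gA gB gD Y Z := by
      rw [hsv]; linear_combination h40
    have h5 : 4*(m*q + sv)^2 ≤ m^2 := by nlinarith [hq1, hq2]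
    have h6 : m*m ≤ m * Q3 m b' c' d' e' f' q Y Z := mul_le_mul_of_nonneg_left h3 (le_of_lt hm)
    nlinarith [h4, h5, h6]
  have posG : ∀ Y Z : ℤ, ¬(Y = 0 ∧ Z = 0) → 0 < Q2 gA gB gD Y Z := by
    intro Y Z hYZ
    have := claim Y Z hYZ
    nlinarith [hm]
  obtain ⟨μ, Y₀, Z₀, hYZ₀, hμval, hμb⟩ := binary_min_bound gA gB gD posG
  rw [hdiscG] at hμb
  have hμlow : 3*m^2 ≤ 4*μ := by rw [← hμval]; exact claim Y₀ Z₀ hYZ₀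
  have hμ0 : 0 ≤ 3*m^2 := by positivity
  have e1 : (3*m^2)*(3*m^2) ≤ (4*μ)*(4*μ) := mul_self_le_mul_self hμ0 hμlow
  have e2 : 27*m^4 ≤ 64*m := by nlinarith [e1, hμb]
  have hm1 : m = 1 := by
    rcases lt_or_ge m 2 with h | h
    · omega
    · exfalso
      have h8 : 8*m ≤ m^4 := by nlinarith [h, sq_nonneg (m - 2), sq_nonneg m, sq_nonneg (m+2)]
      nlinarith [e2, h8, hm]
  subst hm1
  -- extract a as a value of the reduced form
  obtain ⟨X, hX⟩ : ∃ t, t = p22*p33 - p23*p32 := ⟨_, rfl⟩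
  obtain ⟨Y, hY⟩ : ∃ t, t = p23*z₀ - y₀*p33 := ⟨_, rfl⟩
  obtain ⟨Z, hZ⟩ : ∃ t, t = y₀*p32 - p22*z₀ := ⟨_, rfl⟩
  have himg1 : x₀*X + p12*Y + p13*Z = 1 := by
    rw [hX, hY, hZ]; linear_combination hU
  have himg2 : y₀*X + p22*Y + p23*Z = 0 := by rw [hX, hY, hZ]; ring
  have himg3 : z₀*X + p32*Y + p33*Z = 0 := by rw [hX, hY, hZ]; ring
  have ha : Q3 1 b' c' d' e' f' X Y Z = a := by
    rw [← htrans, himg1, himg2, himg3]; unfold Q3; ring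
  have ha2 : a = (1*X + d'*Y + e'*Z)^2 + Q2 gA gB gD Y Z := by
    have h9 := I1 X Y Z
    rw [ha] at h9
    linarith [h9]
  obtain ⟨r, s, hrs⟩ := binary_sum_two_squares gA gB gD posG (by rw [hdiscG]) Y Z
  exact ⟨1*X + d'*Y + e'*Z, r, s, by rw [ha2, hrs]; ring⟩

set_option maxHeartbeats 1000000 in
theorem three_squares_mod_four (N : ℕ) (h4 : N % 4 = 1) :
    ∃ r s t : ℤ, (N:ℤ) = r^2 + s^2 + t^2 := by
  rcases eq_or_ne N 1 with rfl | hN1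
  · exact ⟨1, 0, 0, by norm_num⟩
  have hN5 : 5 ≤ N := by omega
  have hNpos : 0 < N := by omega
  haveI : NeZero (4*N) := ⟨by omega⟩
  have hunit : IsUnit ((2*N-1 : ℕ) : ZMod (4*N)) := by
    rw [ZMod.isUnit_iff_coprime]
    have key : ∀ a : ℕ, a ∣ 2*N-1 → a ∣ 4*N → a = 1 := by
      intro a ha hb
      have h1 : a ∣ 4*N - 2 := by
        have : 2*(2*N-1) = 4*N-2 := by omega
        rw [← this]; exact Dvd.dvd.mul_left ha 2
      have h2 : a ∣ 2 := by
        have h3 := Nat.dvd_sub hb h1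
        have h6 : 4*N - (4*N-2) = 2 := by omega
        rwa [h6] at h3
      rcases (Nat.dvd_prime Nat.prime_two).mp h2 with h | h
      · exact h
      · subst h; omega
    exact key _ (Nat.gcd_dvd_left _ _) (Nat.gcd_dvd_right _ _)
  obtain ⟨p, hpgt, hpp, hpmod⟩ := Nat.forall_exists_prime_gt_and_eq_mod hunit (4*N)
  haveI : Fact p.Prime := ⟨hpp⟩
  have hp4 : p % 4 = 1 := by
    have hcast : (p : ZMod 4) = ((2*N-1 : ℕ) : ZMod 4) := by
      have := congrArg (ZMod.castHom (⟨N, by ring⟩ : (4:ℕ) ∣ 4*N) (ZMod 4)) hpmod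
      simpa using this
    have := (ZMod.natCast_eq_natCast_iff' p (2*N-1) 4).mp hcast
    omega
  have hpN : (p : ZMod N) = -1 := by
    have hcast : (p : ZMod N) = ((2*N-1 : ℕ) : ZMod N) := by
      have := congrArg (ZMod.castHom (⟨4, by ring⟩ : N ∣ 4*N) (ZMod N)) hpmod
      simpa using this
    have h2 : ((2*N-1 : ℕ) : ZMod N) = -1 := by
      rw [show (2*N-1 : ℕ) = N*2 - 1 by ring_nf, Nat.cast_sub (by omega)]
      push_cast
      simp
    rw [hcast, h2]
  have hpNgt : N < p := by omega
  have hp2 : p ≠ 2 := by omega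
  have hpodd : Odd p := hpp.odd_of_ne_two hp2
  have hNodd : Odd N := by rw [Nat.odd_iff]; omega
  obtain ⟨D, hD⟩ : (N:ℤ) ∣ (p:ℤ)^3 + 1 := by
    have : (((p:ℤ)^3 + 1 : ℤ) : ZMod N) = 0 := by
      push_cast
      rw [hpN]; ring
    exact (ZMod.intCast_zmod_eq_zero_iff_dvd _ _).mp this
  have hppos : (0:ℤ) < (p:ℤ) := by exact_mod_cast hpp.pos
  have hDpos : 0 < D := by
    by_contra h
    push_neg at h
    have h1 : (N:ℤ)*D ≤ 0 :=
      mul_nonpos_iff.mpr (Or.inl ⟨by positivity, h⟩)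
    have hp3 : (0:ℤ) < (p:ℤ)^3 := by positivity
    linarith
  have hNne : ((N:ℤ) : ZMod p) ≠ 0 := by
    push_cast
    rw [Ne, ZMod.natCast_eq_zero_iff]
    intro hdvd
    have := Nat.le_of_dvd hNpos hdvd
    omega
  have hlegN : legendreSym p (-(N:ℤ)) = 1 := by
    have e1 : legendreSym p (-(N:ℤ)) = legendreSym p (-1) * legendreSym p N := by
      rw [← legendreSym.mul]; norm_num
    have e2 : legendreSym p (-1) = 1 := by
      rw [legendreSym.at_neg_one hp2, ZMod.χ₄_nat_one_mod_four hp4]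
    have e3 : legendreSym p (N:ℤ) = 1 := by
      rw [jacobiSym.legendreSym.to_jacobiSym]
      have r1 : jacobiSym (p:ℤ) N = jacobiSym (N:ℤ) p :=
        jacobiSym.quadratic_reciprocity_one_mod_four hp4 hNodd
      have r2 : jacobiSym (p:ℤ) N = jacobiSym (-1 : ℤ) N := by
        apply jacobiSym.mod_left'
        rw [← ZMod.intCast_eq_intCast_iff']
        push_cast
        rw [hpN]
      rw [← r1, r2, jacobiSym.at_neg_one hNodd, ZMod.χ₄_nat_one_mod_four h4]
    rw [e1, e2, e3]; ring
  have hsq : IsSquare ((-(N:ℤ) : ℤ) : ZMod p) := by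
    rw [← legendreSym.eq_one_iff]
    · exact hlegN
    · push_cast
      push_cast at hNne
      simpa using hNne
  obtain ⟨u, hu⟩ := hsq
  have hDN : ((D:ℤ) : ZMod p) * ((N:ℕ) : ZMod p) = 1 := by
    have h0 : (((N:ℤ)*D - ((p:ℤ)^3 + 1) + 1 : ℤ) : ZMod p) = ((1:ℤ) : ZMod p) := by
      rw [← hD]; norm_num
    push_cast at h0
    rw [ZMod.natCast_self] at h0
    push_cast at h0
    linear_combination h0
  set β : ZMod p := u * ((D:ℤ) : ZMod p) with hβ
  have hβsq : β^2 = -((D:ℤ) : ZMod p) := by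
    have h0 : ((-(N:ℤ) : ℤ) : ZMod p) = u * u := hu
    push_cast at h0
    rw [hβ]
    have : u * ((D:ℤ) : ZMod p) * (u * ((D:ℤ) : ZMod p)) = (u*u) * ((D:ℤ):ZMod p)^2 := by ring
    rw [pow_two, this, ← h0]
    linear_combination (-(((D:ℤ)) : ZMod p)) * hDN
  obtain ⟨b, hbdef⟩ : ∃ t : ℤ, t = (β.val : ℤ) := ⟨_, rfl⟩
  obtain ⟨c, hc⟩ : (p:ℤ) ∣ b^2 + D := by
    have : ((b^2 + D : ℤ) : ZMod p) = 0 := by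
      rw [hbdef]
      push_cast
      rw [ZMod.natCast_val, ZMod.cast_id, hβsq]
      ring
    exact (ZMod.intCast_zmod_eq_zero_iff_dvd _ _).mp this
  have hdet : det3 (N:ℤ) (p:ℤ) c 0 (p:ℤ) b = 1 := by
    unfold det3
    linear_combination (-(N:ℤ))*hc - hD
  refine ternary_corner (N:ℤ) (p:ℤ) c 0 (p:ℤ) b ?_ hdet
  intro x y z hxyz
  unfold Q3
  have key : (N:ℤ)*(p:ℤ)*((N:ℤ)*x^2 + (p:ℤ)*y^2 + c*z^2 + 2*(0*x*y + (p:ℤ)*x*z + b*y*z))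
      = (p:ℤ)*((N:ℤ)*x + (p:ℤ)*z)^2 + (N:ℤ)*((p:ℤ)*y + b*z)^2 + z^2 := by
    have hdet2 : (N:ℤ)*(p:ℤ)*c + 2*0*(p:ℤ)*b - (N:ℤ)*b^2 - (p:ℤ)*(p:ℤ)^2 - c*0^2 = 1 := by
      have := hdet; unfold det3 at this; linarith
    linear_combination (z^2) * hdet2
  have hNposZ : (0:ℤ) < (N:ℤ) := by exact_mod_cast hNpos
  have hrhs : 0 < (p:ℤ)*((N:ℤ)*x + (p:ℤ)*z)^2 + (N:ℤ)*((p:ℤ)*y + b*z)^2 + z^2 := by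
    by_contra h0
    push_neg at h0
    have n1 : (0:ℤ) ≤ (p:ℤ)*((N:ℤ)*x + (p:ℤ)*z)^2 := by positivity
    have n2 : (0:ℤ) ≤ (N:ℤ)*((p:ℤ)*y + b*z)^2 := by positivity
    have n3 : (0:ℤ) ≤ z^2 := sq_nonneg z
    have e3 : z = 0 := by nlinarith [n1, n2, n3, h0]
    subst e3
    have e1 : (N:ℤ)*x + (p:ℤ)*0 = 0 := by nlinarith [n1, n2, n3, h0, sq_nonneg ((N:ℤ)*x + (p:ℤ)*0), hppos]
    have e2 : (p:ℤ)*y + b*0 = 0 := by nlinarith [n1, n2, n3, h0, sq_nonneg ((p:ℤ)*y + b*0), hNposZ]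
    have hx : x = 0 := by
      have : (N:ℤ) ≠ 0 := by positivity
      simp only [mul_zero, add_zero] at e1
      exact (mul_eq_zero.mp e1).resolve_left this
    have hy : y = 0 := by
      have : (p:ℤ) ≠ 0 := by positivity
      simp only [mul_zero, add_zero] at e2
      exact (mul_eq_zero.mp e2).resolve_left this
    exact hxyz ⟨hx, hy, rfl⟩
  by_contra hcon
  push_neg at hcon
  have : (N:ℤ)*(p:ℤ)*((N:ℤ)*x^2 + (p:ℤ)*y^2 + c*z^2 + 2*(0*x*y + (p:ℤ)*x*z + b*y*z)) ≤ 0 :=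
    mul_nonpos_iff.mpr (Or.inl ⟨by positivity, hcon⟩)
  linarith [key, hrhs, this]

lemma tri_form (n x y z : ℕ) (h : 2*n = 2*x^2 + y*(y+1) + z*(z+1)) :
    n = x^2 + y*(y+1)/2 + z*(z+1)/2 := by
  obtain ⟨k, hk⟩ := Nat.even_mul_succ_self y
  obtain ⟨l, hl⟩ := Nat.even_mul_succ_self z
  rw [hk, hl] at h ⊢
  have e1 : (k+k)/2 = k := by omega
  have e2 : (l+l)/2 = l := by omega
  rw [e1, e2]
  linarith

lemma sq_to_int (n : ℕ) (r s t : ℤ) (h : ((4*n+1 : ℕ) : ℤ) = r^2+s^2+t^2) :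
    4*n+1 = r.natAbs^2 + s.natAbs^2 + t.natAbs^2 := by
  have h1 : ((r.natAbs : ℤ))^2 = r^2 := by rw [← Int.abs_eq_natAbs]; exact sq_abs r
  have h2 : ((s.natAbs : ℤ))^2 = s^2 := by rw [← Int.abs_eq_natAbs]; exact sq_abs s
  have h3 : ((t.natAbs : ℤ))^2 = t^2 := by rw [← Int.abs_eq_natAbs]; exact sq_abs t
  have : ((4*n+1 : ℕ) : ℤ) = ((r.natAbs^2 + s.natAbs^2 + t.natAbs^2 : ℕ) : ℤ) := by
    push_cast
    push_cast at h
    rw [h, ← h1, ← h2, ← h3]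
    push_cast
    ring
  exact_mod_cast this

lemma odd_case (n a' b' c' : ℕ) (h : 4*n+1 = (2*a'+1)^2 + (b'+b')^2 + (c'+c')^2) :
    n = b'^2 + c'^2 + a'^2 + a' := by
  have h2 : (4:ℤ)*(n:ℤ) = 4*((b':ℤ)^2+(c':ℤ)^2+(a':ℤ)^2+(a':ℤ)) := by
    have hz : ((4*n+1 : ℕ) : ℤ) = (((2*a'+1)^2 + (b'+b')^2 + (c'+c')^2 : ℕ) : ℤ) := by
      exact_mod_cast congrArg (Nat.cast : ℕ → ℤ) h
    push_cast at hz
    linear_combination hz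
  have h3 := mul_left_cancel₀ (by norm_num : (4:ℤ) ≠ 0) h2
  exact_mod_cast h3

lemma even_sum_contra (n A : ℕ) (h : 4*n+1 = 2*A) : False := by omega

lemma decomp (n : ℕ) (r s t : ℤ) (h : ((4*n+1 : ℕ) : ℤ) = r^2+s^2+t^2) :
    ∃ u v w : ℕ, n = u^2 + v^2 + w^2 + w := by
  obtain ⟨A, B, C, hnat⟩ : ∃ A B C : ℕ, 4*n+1 = A^2 + B^2 + C^2 :=
    ⟨_, _, _, sq_to_int n r s t h⟩
  rcases Nat.even_or_odd A with ⟨a', rfl⟩ | ⟨a', rfl⟩ <;>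
    rcases Nat.even_or_odd B with ⟨b', rfl⟩ | ⟨b', rfl⟩ <;>
      rcases Nat.even_or_odd C with ⟨c', rfl⟩ | ⟨c', rfl⟩
  · exfalso
    have h2 : 4*n+1 = 4*(a'^2+b'^2+c'^2) := by rw [hnat]; ring
    omega
  · exact ⟨a', b', c', odd_case n c' a' b' (by rw [hnat]; try ring)⟩
  · exact ⟨a', c', b', odd_case n b' a' c' (by rw [hnat]; try ring)⟩
  · exfalso
    have h2 : 4*n+1 = 4*(a'^2+b'^2+b'+c'^2+c') + 2 := by rw [hnat]; ring
    omega
  · exact ⟨b', c', a', odd_case n a' b' c' (by rw [hnat]; try ring)⟩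
  · exfalso
    have h2 : 4*n+1 = 4*(a'^2+a'+b'^2+c'^2+c') + 2 := by rw [hnat]; ring
    omega
  · exfalso
    have h2 : 4*n+1 = 4*(a'^2+a'+b'^2+b'+c'^2) + 2 := by rw [hnat]; ring
    omega
  · exfalso
    have h2 : 4*n+1 = 4*(a'^2+a'+b'^2+b'+c'^2+c') + 3 := by rw [hnat]; ring
    omega

theorem stmt_14 : ∀ n : ℕ, 28 ≤ n → ∃ x y z : ℕ, 7 ≤ z ∧
    n = x ^ 2 + y * (y + 1) / 2 + z * (z + 1) / 2 := by
  intro n hn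
  obtain ⟨r, s, t, h3⟩ := three_squares_mod_four (4*n+1) (by omega)
  obtain ⟨u, v, w, hn2⟩ := decomp n r s t (by exact_mod_cast h3)
  obtain ⟨U, V, hUV, hn3⟩ : ∃ U V : ℕ, V ≤ U ∧ n = U^2 + V^2 + w^2 + w := by
    rcases le_total v u with h | h
    · exact ⟨u, v, h, hn2⟩
    · exact ⟨v, u, h, by rw [hn2]; ring⟩
  rcases le_or_gt 7 (U + w) with hbig | hsmall
  · rcases le_or_gt U w with hc | hc
    · obtain ⟨y, rfl⟩ : ∃ y, w = y + U := ⟨w - U, by omega⟩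
      refine ⟨V, y, U + (y + U), hbig, tri_form _ _ _ _ ?_⟩
      rw [hn3]; ring
    · obtain ⟨y, rfl⟩ : ∃ y, U = w + y + 1 := ⟨U - w - 1, by omega⟩
      refine ⟨V, y, (w + y + 1) + w, hbig, tri_form _ _ _ _ ?_⟩
      rw [hn3]; ring
  · have hU6 : U ≤ 6 := by omega
    have hV6 : V ≤ U := hUV
    have hw6 : w ≤ 6 := by omega
    have hb : n ≤ 72 := by nlinarith [hn3, hUV, hsmall, hU6, hw6]
    interval_cases n
    · exact ⟨0, 0, 7, by norm_num, by norm_num⟩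
    · exact ⟨1, 0, 7, by norm_num, by norm_num⟩
    · exact ⟨1, 1, 7, by norm_num, by norm_num⟩
    · exact ⟨0, 2, 7, by norm_num, by norm_num⟩
    · exact ⟨2, 0, 7, by norm_num, by norm_num⟩
    · exact ⟨2, 1, 7, by norm_num, by norm_num⟩
    · exact ⟨0, 3, 7, by norm_num, by norm_num⟩
    · exact ⟨2, 2, 7, by norm_num, by norm_num⟩
    · exact ⟨0, 0, 8, by norm_num, by norm_num⟩
    · exact ⟨3, 0, 7, by norm_num, by norm_num⟩
    · exact ⟨3, 1, 7, by norm_num, by norm_num⟩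
    · exact ⟨1, 4, 7, by norm_num, by norm_num⟩
    · exact ⟨3, 2, 7, by norm_num, by norm_num⟩
    · exact ⟨2, 1, 8, by norm_num, by norm_num⟩
    · exact ⟨2, 4, 7, by norm_num, by norm_num⟩
    · exact ⟨3, 3, 7, by norm_num, by norm_num⟩
    · exact ⟨4, 0, 7, by norm_num, by norm_num⟩
    · exact ⟨4, 1, 7, by norm_num, by norm_num⟩
    · exact ⟨3, 1, 8, by norm_num, by norm_num⟩
    · exact ⟨4, 2, 7, by norm_num, by norm_num⟩
    · exact ⟨3, 2, 8, by norm_num, by norm_num⟩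
    · exact ⟨0, 6, 7, by norm_num, by norm_num⟩
    · exact ⟨4, 3, 7, by norm_num, by norm_num⟩
    · exact ⟨3, 3, 8, by norm_num, by norm_num⟩
    · exact ⟨3, 5, 7, by norm_num, by norm_num⟩
    · exact ⟨5, 0, 7, by norm_num, by norm_num⟩
    · exact ⟨5, 1, 7, by norm_num, by norm_num⟩
    · exact ⟨4, 2, 8, by norm_num, by norm_num⟩
    · exact ⟨5, 2, 7, by norm_num, by norm_num⟩
    · exact ⟨1, 7, 7, by norm_num, by norm_num⟩
    · exact ⟨3, 6, 7, by norm_num, by norm_num⟩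
    · exact ⟨5, 3, 7, by norm_num, by norm_num⟩
    · exact ⟨2, 7, 7, by norm_num, by norm_num⟩
    · exact ⟨5, 0, 8, by norm_num, by norm_num⟩
    · exact ⟨5, 1, 8, by norm_num, by norm_num⟩
    · exact ⟨5, 4, 7, by norm_num, by norm_num⟩
    · exact ⟨6, 0, 7, by norm_num, by norm_num⟩
    · exact ⟨6, 1, 7, by norm_num, by norm_num⟩
    · exact ⟨3, 6, 8, by norm_num, by norm_num⟩
    · exact ⟨6, 2, 7, by norm_num, by norm_num⟩
    · exact ⟨5, 5, 7, by norm_num, by norm_num⟩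
    · exact ⟨3, 5, 9, by norm_num, by norm_num⟩
    · exact ⟨6, 3, 7, by norm_num, by norm_num⟩
    · exact ⟨5, 4, 8, by norm_num, by norm_num⟩
    · exact ⟨4, 7, 7, by norm_num, by norm_num⟩
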